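/- Let R be a finite p-group acting uniserially on a free ℤ_p-module T of finite rank d, with lower R-central series T = T₀ > T₁ > ⋯. Then T_{n+d} = p·T_n for all n ≥ 0. -/

import Mathlib

variable (R : Type*) [Group R] (T : Type*) [AddCommGroup T] [DistribMulAction R T]

/-- The lower `R`-central series: `T₀ = T`, `T_{i+1} = [R, T_i]`. -/
def lowerRCentral : ℕ → AddSubgroup T
  | 0 => ⊤
  | (i + 1) => AddSubgroup.closure {x | ∃ t ∈ lowerRCentral i, ∃ g : R, x = g • t - t}

/-- `R` acts uniserially on `T` if `[T_i : T_{i+1}] = p` whenever `T_i ≠ 0`. -/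
def IsUniserial (p : ℕ) : Prop :=
  ∀ i : ℕ, lowerRCentral R T i ≠ ⊥ →
    (lowerRCentral R T (i + 1)).relIndex (lowerRCentral R T i) = p

namespace LGAux

open AddSubgroup QuotientAddGroup Multiplicative
open scoped commutatorElement

/-! ### The one-step operator `A ↦ [R, A]` -/

def step (A : AddSubgroup T) : AddSubgroup T :=
  AddSubgroup.closure {x | ∃ t ∈ A, ∃ g : R, x = g • t - t}

lemma lowerRCentral_succ (i : ℕ) :
    lowerRCentral R T (i + 1) = step R T (lowerRCentral R T i) := rfl

lemma lowerRCentral_eq_iterate (i n : ℕ) :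
    lowerRCentral R T (i + n) = (step R T)^[n] (lowerRCentral R T i) := by
  induction n with
  | zero => rfl
  | succ n ih =>
      rw [show i + (n + 1) = (i + n) + 1 from rfl, lowerRCentral_succ, ih,
        Function.iterate_succ_apply']

lemma step_mono {A B : AddSubgroup T} (h : A ≤ B) : step R T A ≤ step R T B := by
  apply AddSubgroup.closure_mono
  rintro x ⟨t, ht, g, rfl⟩
  exact ⟨t, h ht, g, rfl⟩

lemma smul_mem_step {A : AddSubgroup T} (g : R) {x : T} (hx : x ∈ step R T A) :
    g • x ∈ step R T A := by
  have h : AddSubgroup.map (DistribMulAction.toAddMonoidHom T g) (step R T A) ≤ step R T A := by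
    rw [step, AddMonoidHom.map_closure]
    refine (AddSubgroup.closure_le _).2 ?_
    rintro y ⟨x, ⟨t, ht, g', rfl⟩, rfl⟩
    have : (DistribMulAction.toAddMonoidHom T g) (g' • t - t)
        = ((g * g') • t - t) - (g • t - t) := by
      simp only [DistribMulAction.toAddMonoidHom_apply, smul_sub, mul_smul]
      abel
    rw [this]
    exact sub_mem (subset_closure ⟨t, ht, g * g', rfl⟩) (subset_closure ⟨t, ht, g, rfl⟩)
  exact h ⟨x, hx, rfl⟩

lemma smul_mem_lowerRCentral (i : ℕ) (g : R) {x : T} (hx : x ∈ lowerRCentral R T i) :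
    g • x ∈ lowerRCentral R T i := by
  cases i with
  | zero => exact AddSubgroup.mem_top _
  | succ i => exact smul_mem_step R T g hx

lemma lowerRCentral_succ_le (i : ℕ) :
    lowerRCentral R T (i + 1) ≤ lowerRCentral R T i := by
  rw [lowerRCentral_succ]
  refine (AddSubgroup.closure_le _).2 ?_
  rintro x ⟨t, ht, g, rfl⟩
  exact sub_mem (smul_mem_lowerRCentral R T i g ht) ht

lemma lowerRCentral_antitone : Antitone (lowerRCentral R T) :=
  antitone_nat_of_succ_le (lowerRCentral_succ_le R T)

lemma step_sup (A B : AddSubgroup T) : step R T (A ⊔ B) = step R T A ⊔ step R T B := by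
  apply le_antisymm
  · refine (AddSubgroup.closure_le _).2 ?_
    rintro x ⟨t, ht, g, rfl⟩
    obtain ⟨a, ha, b, hb, rfl⟩ := AddSubgroup.mem_sup.1 ht
    have : g • (a + b) - (a + b) = (g • a - a) + (g • b - b) := by
      rw [smul_add]; abel
    rw [this]
    exact add_mem (AddSubgroup.mem_sup_left (subset_closure ⟨a, ha, g, rfl⟩))
      (AddSubgroup.mem_sup_right (subset_closure ⟨b, hb, g, rfl⟩))
  · exact sup_le (step_mono R T le_sup_left) (step_mono R T le_sup_right)

lemma step_map (f : T →+ T) (hf : ∀ (g : R) (t : T), f (g • t) = g • f t) (A : AddSubgroup T) :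
    AddSubgroup.map f (step R T A) = step R T (AddSubgroup.map f A) := by
  rw [step, AddMonoidHom.map_closure, step]
  congr 1
  ext x
  constructor
  · rintro ⟨y, ⟨t, ht, g, rfl⟩, rfl⟩
    exact ⟨f t, ⟨t, ht, rfl⟩, g, by rw [map_sub, hf]⟩
  · rintro ⟨s, ⟨t, ht, rfl⟩, g, rfl⟩
    exact ⟨g • t - t, ⟨t, ht, g, rfl⟩, by rw [map_sub, hf]⟩

/-! ### Multiplication by `p` -/

def pmul (p : ℕ) : T →+ T where
  toFun t := p • t
  map_zero' := smul_zero p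
  map_add' a b := smul_add p a b

lemma pmul_apply (p : ℕ) (t : T) : pmul T p t = p • t := rfl

lemma pmul_equivariant (p : ℕ) (g : R) (t : T) : pmul T p (g • t) = g • pmul T p t := by
  simpa only [DistribMulAction.toAddMonoidHom_apply, pmul_apply] using
    ((DistribMulAction.toAddMonoidHom T g).map_nsmul p t).symm

/-! ### The quotient action and the nilpotency argument -/

variable (P : AddSubgroup T) (hP : ∀ (g : R) (x : T), x ∈ P → g • x ∈ P)

def qact (g : R) : T ⧸ P →+ T ⧸ P :=
  QuotientAddGroup.map P P (DistribMulAction.toAddMonoidHom T g) (fun x hx => hP g x hx)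

lemma qact_mk (g : R) (t : T) :
    qact R T P hP g (QuotientAddGroup.mk t) = QuotientAddGroup.mk (g • t) :=
  QuotientAddGroup.map_mk P P _ _ t

lemma qact_qact (g h : R) (v : T ⧸ P) :
    qact R T P hP g (qact R T P hP h v) = qact R T P hP (g * h) v := by
  refine QuotientAddGroup.induction_on v fun t => ?_
  rw [qact_mk, qact_mk, qact_mk, mul_smul]

lemma qact_one (v : T ⧸ P) : qact R T P hP 1 v = v := by
  refine QuotientAddGroup.induction_on v fun t => ?_
  rw [qact_mk, one_smul]

def qaut (g : R) : MulAut (Multiplicative (T ⧸ P)) where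
  toFun x := ofAdd (qact R T P hP g x.toAdd)
  invFun x := ofAdd (qact R T P hP g⁻¹ x.toAdd)
  left_inv x := by
    simp only [toAdd_ofAdd, qact_qact, inv_mul_cancel, qact_one, ofAdd_toAdd]
  right_inv x := by
    simp only [toAdd_ofAdd, qact_qact, mul_inv_cancel, qact_one, ofAdd_toAdd]
  map_mul' a b := by
    simp only [toAdd_mul, map_add, ofAdd_add]

def qhom : R →* MulAut (Multiplicative (T ⧸ P)) where
  toFun := qaut R T P hP
  map_one' := by
    ext x
    show ofAdd (qact R T P hP 1 x.toAdd) = x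
    rw [qact_one, ofAdd_toAdd]
  map_mul' g h := by
    ext x
    show ofAdd (qact R T P hP (g * h) x.toAdd) = ofAdd (qact R T P hP g (toAdd (ofAdd
      (qact R T P hP h x.toAdd))))
    rw [toAdd_ofAdd, qact_qact]

lemma qhom_apply (g : R) (t : T) :
    qhom R T P hP g (ofAdd (QuotientAddGroup.mk t)) = ofAdd (QuotientAddGroup.mk (g • t)) := by
  show ofAdd (qact R T P hP g (QuotientAddGroup.mk t)) = _
  rw [qact_mk]

include hP in
lemma exists_lowerRCentral_le (p : ℕ) [Fact p.Prime] [Finite R] (hR : IsPGroup p R)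
    (hfin : Finite (T ⧸ P)) (hPp : ∀ t : T, p • t ∈ P) :
    ∃ N, lowerRCentral R T N ≤ P := by
  classical
  set φ := qhom R T P hP with hφ
  let G := SemidirectProduct (Multiplicative (T ⧸ P)) R φ
  haveI : Finite G := Finite.of_equiv ((Multiplicative (T ⧸ P)) × R)
    { toFun := fun q => ⟨q.1, q.2⟩
      invFun := fun x => (x.left, x.right)
      left_inv := fun q => rfl
      right_inv := fun x => by cases x; rfl }
  have hVp : ∀ v : T ⧸ P, p • v = 0 := by
    intro v
    refine QuotientAddGroup.induction_on v fun t => ?_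
    have : ((p • t : T) : T ⧸ P) = p • ((t : T) : T ⧸ P) :=
      map_nsmul (QuotientAddGroup.mk' P) p t
    rw [← this, (QuotientAddGroup.eq_zero_iff _).2 (hPp t)]
  have hMp : ∀ v : Multiplicative (T ⧸ P), v ^ p = 1 := by
    intro v
    have : v ^ p = ofAdd (p • v.toAdd) := by rw [ofAdd_nsmul, ofAdd_toAdd]
    rw [this, hVp, ofAdd_zero]
  have hG : IsPGroup p G := by
    intro g
    obtain ⟨j, hj⟩ := hR (SemidirectProduct.rightHom g)
    have hker : g ^ p ^ j ∈ (SemidirectProduct.rightHom : G →* R).ker := by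
      rw [MonoidHom.mem_ker, map_pow, hj]
    rw [← SemidirectProduct.range_inl_eq_ker_rightHom] at hker
    obtain ⟨v, hv⟩ := hker
    refine ⟨j + 1, ?_⟩
    rw [pow_succ, pow_mul, ← hv, ← map_pow, hMp, map_one]
  have claim : ∀ i, ∀ t ∈ lowerRCentral R T i,
      (SemidirectProduct.inl (ofAdd (QuotientAddGroup.mk t)) : G) ∈ Subgroup.lowerCentralSeries (⊤ : Subgroup G) i := by
    intro i
    induction i with
    | zero => intro t _; exact Subgroup.mem_top _
    | succ i ih =>
        intro t ht
        refine AddSubgroup.closure_induction ?_ ?_ ?_ ?_ ht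
        · rintro x ⟨t', ht', g, rfl⟩
          have hv : (SemidirectProduct.inl (ofAdd (QuotientAddGroup.mk t')) : G) ∈
              Subgroup.lowerCentralSeries (⊤ : Subgroup G) i := ih t' ht'
          have hcomm : ⁅(SemidirectProduct.inl (ofAdd (QuotientAddGroup.mk t')) : G),
              SemidirectProduct.inr g⁆ ∈ Subgroup.lowerCentralSeries (⊤ : Subgroup G) (i + 1) := by
            have hγ : Subgroup.lowerCentralSeries (⊤ : Subgroup G) (i + 1) = ⁅Subgroup.lowerCentralSeries (⊤ : Subgroup G) i, ⊤⁆ := rfl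
            rw [hγ]
            exact Subgroup.commutator_mem_commutator hv (Subgroup.mem_top _)
          have heq : (SemidirectProduct.inl (ofAdd (QuotientAddGroup.mk (g • t' - t'))) : G)
              = ⁅(SemidirectProduct.inl (ofAdd (QuotientAddGroup.mk t')) : G),
                  SemidirectProduct.inr g⁆⁻¹ := by
            rw [commutatorElement_inv, commutatorElement_def]
            have h1 : ((SemidirectProduct.inr g : G))⁻¹ = SemidirectProduct.inr g⁻¹ := by
              rw [← map_inv]
            rw [h1, ← SemidirectProduct.inl_aut, ← map_inv, ← map_mul]
            congr 1
            rw [qhom_apply, ← ofAdd_neg, ← ofAdd_add]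
            congr 1
            show _ = ((g • t' : T) : T ⧸ P) + -((t' : T) : T ⧸ P)
            rw [← sub_eq_add_neg, ← QuotientAddGroup.mk_sub]
          rw [heq]
          exact inv_mem hcomm
        · have h0 : (QuotientAddGroup.mk (0 : T) : T ⧸ P) = 0 := QuotientAddGroup.mk_zero P
          rw [h0, ofAdd_zero, map_one]
          exact one_mem _
        · intro x y _ _ hx hy
          rw [QuotientAddGroup.mk_add, ofAdd_add, map_mul]
          exact mul_mem hx hy
        · intro x _ hx
          rw [QuotientAddGroup.mk_neg, ofAdd_neg, map_inv]
          exact inv_mem hx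
  haveI : Group.IsNilpotent G := hG.isNilpotent
  obtain ⟨N, hN⟩ := Subgroup.nilpotent_iff_lowerCentralSeries.mp this
  refine ⟨N, fun t ht => ?_⟩
  have hmem := claim N t ht
  rw [hN, Subgroup.mem_bot] at hmem
  have h2 : ofAdd (QuotientAddGroup.mk t : T ⧸ P) = 1 :=
    SemidirectProduct.inl_injective (hmem.trans (map_one _).symm)
  have h3 : (QuotientAddGroup.mk t : T ⧸ P) = 0 := by
    have := congrArg Multiplicative.toAdd h2
    simpa using this
  exact (QuotientAddGroup.eq_zero_iff t).1 h3

/-! ### Index computations via a basis -/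

noncomputable def coordHom (p : ℕ) [Fact p.Prime] [Module (PadicInt p) T] {ι : Type*}
    (b : Module.Basis ι (PadicInt p) T) : T →+ (ι → ZMod p) where
  toFun t i := PadicInt.toZMod (b.repr t i)
  map_zero' := by funext i; simp
  map_add' a c := by funext i; simp

lemma coordHom_surjective (p : ℕ) [Fact p.Prime] [Module (PadicInt p) T] {ι : Type*} [Fintype ι]
    (b : Module.Basis ι (PadicInt p) T) : Function.Surjective (coordHom T p b) := by
  intro f
  refine ⟨∑ i, ((f i).val : PadicInt p) • b i, ?_⟩
  funext j
  show PadicInt.toZMod (b.repr (∑ i, ((f i).val : PadicInt p) • b i) j) = f j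
  rw [Module.Basis.repr_sum_self]
  haveI : NeZero p := ⟨(Fact.out : p.Prime).ne_zero⟩
  rw [map_natCast, ZMod.natCast_val, ZMod.cast_id]

lemma coordHom_ker (p : ℕ) [Fact p.Prime] [Module (PadicInt p) T] {ι : Type*} [Fintype ι]
    (b : Module.Basis ι (PadicInt p) T) :
    (coordHom T p b).ker = AddSubgroup.map (pmul T p) ⊤ := by
  have hz : ∀ z : PadicInt p, PadicInt.toZMod z = 0 ↔ (p : PadicInt p) ∣ z := by
    intro z
    rw [← RingHom.mem_ker, PadicInt.ker_toZMod, PadicInt.maximalIdeal_eq_span_p,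
      Ideal.mem_span_singleton]
  ext t
  constructor
  · intro ht
    have h : ∀ i, (p : PadicInt p) ∣ b.repr t i := by
      intro i
      exact (hz _).1 (congrFun (AddMonoidHom.mem_ker.1 ht) i)
    choose c hc using h
    refine ⟨∑ i, c i • b i, trivial, ?_⟩
    show (p : ℕ) • (∑ i, c i • b i) = t
    rw [← Nat.cast_smul_eq_nsmul (PadicInt p), Finset.smul_sum]
    conv_rhs => rw [← b.sum_repr t]
    refine Finset.sum_congr rfl fun i _ => ?_
    rw [← mul_smul, ← hc]
  · rintro ⟨s, -, rfl⟩
    rw [AddMonoidHom.mem_ker]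
    funext i
    show PadicInt.toZMod (b.repr (pmul T p s) i) = 0
    have h2 : (pmul T p s) = (p : PadicInt p) • s := by
      rw [pmul_apply, Nat.cast_smul_eq_nsmul]
    rw [h2, map_smul, Finsupp.smul_apply, smul_eq_mul]
    exact (hz _).2 (dvd_mul_right _ _)

lemma pmul_index (p : ℕ) [Fact p.Prime] [Module (PadicInt p) T] {ι : Type*} [Fintype ι]
    (b : Module.Basis ι (PadicInt p) T) :
    (AddSubgroup.map (pmul T p) (⊤ : AddSubgroup T)).index = p ^ Fintype.card ι := by
  rw [← coordHom_ker T p b, AddSubgroup.index_ker,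
    AddMonoidHom.range_eq_top.2 (coordHom_surjective T p b),
    Nat.card_congr AddSubgroup.topEquiv.toEquiv, Nat.card_fun, Nat.card_zmod,
    Nat.card_eq_fintype_card]

lemma infiniteT (p : ℕ) [Fact p.Prime] [Module (PadicInt p) T] {ι : Type*} [Fintype ι] [Nonempty ι]
    (b : Module.Basis ι (PadicInt p) T) : Infinite T := by
  obtain ⟨i₀⟩ := ‹Nonempty ι›
  refine Infinite.of_injective (fun c : PadicInt p => c • b i₀) ?_
  intro c c' h
  have := congrArg (fun t => b.repr t i₀) h
  simpa [Module.Basis.repr_self] using this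

end LGAux

open LGAux

/-- Let `R` be a finite `p`-group acting uniserially on a free `ℤ_p`-module `T` of finite
rank `d ≥ 1`, with lower `R`-central series `T = T₀ > T₁ > ⋯`. Then `T_{n+d} = p·T_n` for
all `n ≥ 0`. -/
theorem lowerRCentral_add_rank_eq_p_smul (p : ℕ) [Fact p.Prime]
    [Fintype R] (hR : IsPGroup p R)
    [Module (PadicInt p) T] [SMulCommClass R (PadicInt p) T]
    [Module.Free (PadicInt p) T] [Module.Finite (PadicInt p) T]
    (d : ℕ) (hd : d = Module.finrank (PadicInt p) T) (hd1 : 1 ≤ d)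
    (hU : IsUniserial R T p)
    (n : ℕ) :
    ∀ x : T, x ∈ lowerRCentral R T (n + d) ↔ ∃ t ∈ lowerRCentral R T n, x = p • t := by
  classical
  intro x
  have hp : p.Prime := Fact.out
  haveI : NeZero p := ⟨hp.ne_zero⟩
  set b := Module.Free.chooseBasis (PadicInt p) T with hb
  have hcard : Fintype.card (Module.Free.ChooseBasisIndex (PadicInt p) T) = d := by
    rw [hd, Module.finrank_eq_card_chooseBasisIndex]
  haveI : Nonempty (Module.Free.ChooseBasisIndex (PadicInt p) T) :=
    Fintype.card_pos_iff.1 (by rw [hcard]; omega)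
  haveI hInf : Infinite T := infiniteT T p b
  set P : AddSubgroup T := AddSubgroup.map (pmul T p) ⊤ with hPdef
  have hPidx : P.index = p ^ d := by rw [hPdef, pmul_index T p b, hcard]
  have hP : ∀ (g : R) (x : T), x ∈ P → g • x ∈ P := by
    intro g x hx
    obtain ⟨y, -, rfl⟩ := AddSubgroup.mem_map.1 hx
    exact AddSubgroup.mem_map.2 ⟨g • y, AddSubgroup.mem_top _, pmul_equivariant R T p g y⟩
  have hPp : ∀ t : T, p • t ∈ P := fun t =>
    AddSubgroup.mem_map.2 ⟨t, AddSubgroup.mem_top _, rfl⟩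
  have hIdx : ∀ i, (lowerRCentral R T i).index = p ^ i := by
    intro i
    induction i with
    | zero => rw [show lowerRCentral R T 0 = (⊤ : AddSubgroup T) from rfl,
          AddSubgroup.index_top, pow_zero]
    | succ i ih =>
        have hbot : lowerRCentral R T i ≠ ⊥ := by
          intro h
          rw [h, AddSubgroup.index_bot, Nat.card_eq_zero_of_infinite] at ih
          exact pow_ne_zero i hp.ne_zero ih.symm
        have hrel := hU i hbot
        have hmul := AddSubgroup.relIndex_mul_index (lowerRCentral_succ_le R T i)
        rw [hrel, ih] at hmul
        rw [← hmul, pow_succ, mul_comm]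
  have hfinV : Finite (T ⧸ P) := by
    apply Nat.finite_of_card_ne_zero
    have h1 : Nat.card (T ⧸ P) = P.index := rfl
    rw [h1, hPidx]
    exact pow_ne_zero d hp.ne_zero
  have hEx : ∃ N, lowerRCentral R T N ≤ P :=
    exists_lowerRCentral_le R T P hP p hR hfinV hPp
  set k := Nat.find hEx with hkdef
  have hk : lowerRCentral R T k ≤ P := Nat.find_spec hEx
  have hdk : d ≤ k := by
    have h1 : P.index ∣ (lowerRCentral R T k).index := AddSubgroup.index_dvd_of_le hk
    rw [hPidx, hIdx k] at h1
    exact (Nat.pow_dvd_pow_iff_le_right hp.one_lt).1 h1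
  set S : ℕ → AddSubgroup T := fun i => lowerRCentral R T i ⊔ P with hSdef
  have hstepP : step R T P ≤ P := by
    have h1 : step R T P = AddSubgroup.map (pmul T p) (step R T ⊤) := by
      rw [hPdef, step_map R T _ (pmul_equivariant R T p)]
    rw [h1, hPdef]
    exact AddSubgroup.map_mono le_top
  have hSrec : ∀ i, S (i + 1) = step R T (S i) ⊔ P := by
    intro i
    show lowerRCentral R T (i + 1) ⊔ P = step R T (lowerRCentral R T i ⊔ P) ⊔ P
    rw [lowerRCentral_succ, step_sup, sup_assoc, sup_eq_right.2 hstepP]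
  have hSk : ∀ j, k ≤ j → S j = P := by
    intro j hj
    show lowerRCentral R T j ⊔ P = P
    exact sup_eq_right.2 ((lowerRCentral_antitone R T hj).trans hk)
  have hstab : ∀ i, S (i + 1) = S i → ∀ j, i ≤ j → S j = S i := by
    intro i hstep j
    induction j with
    | zero => intro hj; obtain rfl : i = 0 := Nat.le_zero.1 hj; rfl
    | succ j ihj =>
        intro hj
        by_cases hij : i ≤ j
        · rw [hSrec j, ihj hij, ← hSrec i, hstep]
        · obtain rfl : i = j + 1 := le_antisymm hj (by omega)
          rfl
  have hstrict : ∀ i, i < k → S (i + 1) < S i := by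
    intro i hik
    refine lt_of_le_of_ne (sup_le_sup_right (lowerRCentral_succ_le R T i) P) ?_
    intro heq
    have h1 : S (max i k) = S i := hstab i heq _ (le_max_left _ _)
    have h2 : S (max i k) = P := hSk _ (le_max_right _ _)
    have h3 : lowerRCentral R T i ≤ P := by
      have h4 : lowerRCentral R T i ≤ S i := le_sup_left
      rw [← h1, h2] at h4
      exact h4
    exact absurd (Nat.find_min' hEx h3) (by omega)
  have hSidx : ∀ i, (S i).index ∣ p ^ d := by
    intro i
    have h1 := AddSubgroup.index_dvd_of_le (le_sup_right : P ≤ S i)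
    rwa [hPidx] at h1
  have claim : ∀ i, i ≤ k → p ^ i ∣ (S i).index := by
    intro i
    induction i with
    | zero => intro _; exact one_dvd _
    | succ i ih =>
        intro hik1
        have hik : i < k := hik1
        have hi := ih hik.le
        have hlt := hstrict i hik
        obtain ⟨e, hed, hSe⟩ := (Nat.dvd_prime_pow hp).1 (hSidx (i + 1))
        have hdvd : (S i).index ∣ (S (i + 1)).index := AddSubgroup.index_dvd_of_le hlt.le
        have hne : (S i).index ≠ (S (i + 1)).index := by
          intro heq
          have hfi : (S i).index ≠ 0 := by
            intro h0
            exact pow_ne_zero d hp.ne_zero (zero_dvd_iff.1 (h0 ▸ hSidx i))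
          have hrel := AddSubgroup.relIndex_mul_index hlt.le
          rw [← heq] at hrel
          have h5 : (S (i + 1)).relIndex (S i) = 1 :=
            Nat.eq_of_mul_eq_mul_right (Nat.pos_of_ne_zero hfi)
              (hrel.trans (one_mul _).symm)
          exact (not_le_of_gt hlt) (AddSubgroup.relIndex_eq_one.1 h5)
        have hdvd2 : (S i).index ∣ p ^ e := by rw [← hSe]; exact hdvd
        obtain ⟨f, hfe, hSf⟩ := (Nat.dvd_prime_pow hp).1 hdvd2
        have hif : i ≤ f := (Nat.pow_dvd_pow_iff_le_right hp.one_lt).1 (hSf ▸ hi)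
        have hfne : f ≠ e := by
          intro h
          apply hne
          rw [hSf, hSe, h]
        rw [hSe]
        exact pow_dvd_pow p (Nat.succ_le_of_lt (lt_of_le_of_lt hif (lt_of_le_of_ne hfe hfne)))
  have hkd : k ≤ d := by
    have h1 := claim k le_rfl
    rw [hSk k le_rfl, hPidx] at h1
    exact (Nat.pow_dvd_pow_iff_le_right hp.one_lt).1 h1
  have hkd' : k = d := le_antisymm hkd hdk
  have hTdP : lowerRCentral R T d = P := by
    have hle : lowerRCentral R T d ≤ P := hkd' ▸ hk
    have hrel := AddSubgroup.relIndex_mul_index hle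
    rw [hPidx, hIdx d] at hrel
    have h1 : (lowerRCentral R T d).relIndex P = 1 :=
      Nat.eq_of_mul_eq_mul_right (pow_pos hp.pos d) (hrel.trans (one_mul _).symm)
    exact le_antisymm hle (AddSubgroup.relIndex_eq_one.1 h1)
  have hiter : ∀ (m : ℕ) (A : AddSubgroup T),
      (step R T)^[m] (AddSubgroup.map (pmul T p) A)
        = AddSubgroup.map (pmul T p) ((step R T)^[m] A) := by
    intro m
    induction m with
    | zero => intro A; rfl
    | succ m ihm =>
        intro A
        rw [Function.iterate_succ_apply, Function.iterate_succ_apply,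
          ← step_map R T _ (pmul_equivariant R T p), ihm]
  have hmain : lowerRCentral R T (n + d) = AddSubgroup.map (pmul T p) (lowerRCentral R T n) := by
    have h1 : lowerRCentral R T (n + d) = (step R T)^[n] (lowerRCentral R T d) := by
      rw [add_comm n d]; exact lowerRCentral_eq_iterate R T d n
    have h2 : lowerRCentral R T n = (step R T)^[n] (⊤ : AddSubgroup T) := by
      have h3 := lowerRCentral_eq_iterate R T 0 n
      rw [Nat.zero_add] at h3
      exact h3
    rw [h1, hTdP, hPdef, hiter, ← h2]
  rw [hmain]
  constructor
  · intro hx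
    obtain ⟨t, ht, rfl⟩ := AddSubgroup.mem_map.1 hx
    exact ⟨t, ht, rfl⟩
  · rintro ⟨t, ht, rfl⟩
    exact AddSubgroup.mem_map.2 ⟨t, ht, rfl⟩
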